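/- Let (X, Π) be a weighted pure d-dimensional simplicial complex and let 0 ≤ a < b ≤ d−1. Then λ₂(U_{a,b}) ≤ ∏_{j=0}^{b−a−1} λ₂(P∧_{a+j}); that is, the second eigenvalue of the up-down walk through dimension b is at most the product of the second eigenvalues of the intermediate one-step up-down walks. -/

import Mathlib

open Finset

/-- A weighted pure `d`-dimensional simplicial complex on a finite ground set `V`.
Faces are finsets; a face of cardinality `m` has dimension `m - 1` (so `X(j)` is the
set of faces of cardinality `j + 1`).  The family of faces is downward closed, every
face is contained in a face of cardinality `d + 1` (purity), and a probability
distribution `Π = Π_d` (positive weights summing to `1`) is given on the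
top-dimensional faces. -/
structure WSC (V : Type*) [DecidableEq V] [Fintype V] (d : ℕ) where
  faces : Finset (Finset V)
  empty_mem : ∅ ∈ faces
  down_closed : ∀ β ∈ faces, ∀ α ⊆ β, α ∈ faces
  pure : ∀ α ∈ faces, ∃ β ∈ faces, α ⊆ β ∧ β.card = d + 1
  dim_le : ∀ α ∈ faces, α.card ≤ d + 1
  weight : Finset V → ℝ
  weight_pos : ∀ β ∈ faces, β.card = d + 1 → 0 < weight β
  weight_zero : ∀ β : Finset V, β ∉ faces ∨ β.card ≠ d + 1 → weight β = 0
  weight_sum : ∑ β ∈ faces.filter (fun β => β.card = d + 1), weight β = 1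

namespace WSC

variable {V : Type*} [DecidableEq V] [Fintype V] {d : ℕ}

/-- Auxiliary recursion for the marginal distributions: `Waux X t` is the marginal
distribution `Π_{d - t}` on faces of cardinality `d + 1 - t`, defined by
`Π_j(α) = (1/(j+2)) ∑_{β ∈ X(j+1), β ⊇ α} Π_{j+1}(β)`. -/
noncomputable def Waux (X : WSC V d) : ℕ → Finset V → ℝ
  | 0 => X.weight
  | (t + 1) => fun α =>
      (1 / ((d + 1 - t : ℕ) : ℝ)) *
        ∑ β ∈ X.faces.filter (fun β => α ⊆ β ∧ β.card = d + 1 - t), X.Waux t β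

/-- `X.W m α` is the marginal probability `Π_{m-1}(α)` of the face `α` of cardinality
`m` (dimension `m - 1`). -/
noncomputable def W (X : WSC V d) (m : ℕ) : Finset V → ℝ := X.Waux (d + 1 - m)

/-- The inner product `⟨f, g⟩_{Π_{m-1}}` on `ℝ^{X(m-1)}` (faces of cardinality `m`). -/
noncomputable def inn (X : WSC V d) (m : ℕ) (f g : Finset V → ℝ) : ℝ :=
  ∑ α ∈ X.faces.filter (fun α => α.card = m), X.W m α * f α * g α

/-- The up operator `U_j`: `(U_j f)(β) = (1/(j+2)) ∑_{x ∈ β} f(β \ {x})`, for `β` of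
cardinality `j + 2`.  (The formula is uniform in the cardinality of `β`.) -/
noncomputable def upOp (f : Finset V → ℝ) : Finset V → ℝ :=
  fun β => (1 / (β.card : ℝ)) * ∑ x ∈ β, f (β.erase x)

/-- The down operator `D_{j+1}`:
`(D_{j+1} g)(α) = ∑_{β ∈ X(j+1), β ⊇ α} Π_{j+1}(β) g(β) / ((j+2) Π_j(α))`, for `α` of
cardinality `j + 1`.  (The formula is uniform in the cardinality of `α`.) -/
noncomputable def downOp (X : WSC V d) (g : Finset V → ℝ) : Finset V → ℝ :=
  fun α => ∑ β ∈ X.faces.filter (fun β => α ⊆ β ∧ β.card = α.card + 1),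
      (X.W (α.card + 1) β * g β) / (((α.card : ℝ) + 1) * X.W α.card α)

/-- The down-up walk `P∨_k = U_{k-1} D_k`, acting on functions on `X(k)` (faces of
cardinality `k + 1`). -/
noncomputable def downUp (X : WSC V d) (f : Finset V → ℝ) : Finset V → ℝ :=
  upOp (X.downOp f)

/-- The up-down walk `P∧_k = D_{k+1} U_k`, acting on functions on `X(k)` (faces of
cardinality `k + 1`). -/
noncomputable def upDown (X : WSC V d) (f : Finset V → ℝ) : Finset V → ℝ :=
  X.downOp (upOp f)

/-- The `k`-th non-lazy up-down walk `N_k = ((k+2)/(k+1)) (P∧_k - (1/(k+2)) I)`. -/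
noncomputable def nonLazy (X : WSC V d) (k : ℕ) (f : Finset V → ℝ) : Finset V → ℝ :=
  fun α => (((k : ℝ) + 2) / ((k : ℝ) + 1)) * (X.upDown f α - (1 / ((k : ℝ) + 2)) * f α)

/-- The up-down walk `U_{a,b} = D_{a+1} ⋯ D_b · U_{b-1} ⋯ U_a` on `X(a)` through
`X(b)`, where `t = b - a`. -/
noncomputable def upDownAB (X : WSC V d) (t : ℕ) (f : Finset V → ℝ) : Finset V → ℝ :=
  (X.downOp)^[t] (upOp^[t] f)

/-- The second largest eigenvalue of a row-stochastic operator `M` on `ℝ^{X(m-1)}`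
(faces of cardinality `m`) which is self-adjoint with respect to `⟨·,·⟩_{Π_{m-1}}`
and has stationary distribution `Π_{m-1}`: by the variational principle it is the
supremum of the Rayleigh quotients of (nonzero) functions orthogonal to the
constant function `1`. -/
noncomputable def lam2 (X : WSC V d) (m : ℕ) (M : (Finset V → ℝ) → Finset V → ℝ) : ℝ :=
  sSup { r : ℝ | ∃ f : Finset V → ℝ,
    X.inn m f (fun _ => 1) = 0 ∧ X.inn m f f ≠ 0 ∧
    r = X.inn m f (M f) / X.inn m f f }

/-- The vertices of the link `X_α`: those `x ∉ α` with `α ∪ {x} ∈ X`. -/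
def linkVerts (X : WSC V d) (α : Finset V) : Finset V :=
  Finset.univ.filter (fun x => x ∉ α ∧ insert x α ∈ X.faces)

/-- The link distribution `Π^α_l(τ) = Π_{j+1+l}(α ∪ τ) / (C(|α ∪ τ|, |α|) · Π_j(α))`
for a face `α` of dimension `j` and `τ ∈ X_α(l)`. -/
noncomputable def linkPi (X : WSC V d) (α τ : Finset V) : ℝ :=
  X.W (α ∪ τ).card (α ∪ τ) / ((Nat.choose (α ∪ τ).card α.card : ℝ) * X.W α.card α)

/-- The random walk matrix `M_α` of the graph of the link `X_α`, with entries
`M_α(x, y) = Π^α_1({x, y}) / (2 Π^α_0(x))` for `{x, y} ∈ X_α(1)` and `0` otherwise,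
viewed as an operator on functions on the vertices of the link. -/
noncomputable def linkWalk (X : WSC V d) (α : Finset V) (f : V → ℝ) : V → ℝ :=
  fun x => ∑ y ∈ (X.linkVerts α).filter
      (fun y => y ≠ x ∧ insert y (insert x α) ∈ X.faces),
    (X.linkPi α {x, y} / (2 * X.linkPi α {x})) * f y

/-- The projector `J_α` onto the constant functions on the link: `J_α g` is the
constant function with value `E_{x ∼ Π^α_0}[g(x)]`. -/
noncomputable def linkJ (X : WSC V d) (α : Finset V) (g : V → ℝ) : V → ℝ :=
  fun _ => ∑ x ∈ X.linkVerts α, X.linkPi α {x} * g x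

/-- The inner product `⟨g, h⟩_{Π^α_0}` on functions on the vertices of the link. -/
noncomputable def linkInner (X : WSC V d) (α : Finset V) (g h : V → ℝ) : ℝ :=
  ∑ x ∈ X.linkVerts α, X.linkPi α {x} * g x * h x

/-- The second largest eigenvalue `λ₂(M_α)` of the random walk matrix of the graph
of the link `X_α`, via the variational principle. -/
noncomputable def linkLam2 (X : WSC V d) (α : Finset V) : ℝ :=
  sSup { r : ℝ | ∃ f : V → ℝ,
    X.linkInner α f (fun _ => 1) = 0 ∧ X.linkInner α f f ≠ 0 ∧
    r = X.linkInner α f (X.linkWalk α f) / X.linkInner α f f }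

/-- `X.gammaC m` is `γ_{m-1} = max_{α ∈ X(m-1)} λ₂(M_α)`, the maximum over faces `α`
of cardinality `m` (dimension `m - 1`) of the second eigenvalue of the link walk. -/
noncomputable def gammaC (X : WSC V d) (m : ℕ) : ℝ :=
  sSup { r : ℝ | ∃ α ∈ X.faces, α.card = m ∧ r = X.linkLam2 α }

end WSC


namespace WSC

variable {V : Type*} [DecidableEq V] [Fintype V] {d : ℕ}

lemma exists_superface (X : WSC V d) {α : Finset V} (hα : α ∈ X.faces) (h : α.card ≤ d) :
    ∃ β ∈ X.faces, α ⊆ β ∧ β.card = α.card + 1 := by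
  obtain ⟨γ, hγ, hsub, hcard⟩ := X.pure α hα
  obtain ⟨x, hxγ, hxα⟩ : ∃ x ∈ γ, x ∉ α := by
    by_contra h'
    push_neg at h'
    have := Finset.card_le_card h'
    omega
  exact ⟨insert x α, X.down_closed γ hγ _ (Finset.insert_subset hxγ hsub),
    Finset.subset_insert _ _, Finset.card_insert_of_notMem hxα⟩

lemma Waux_pos (X : WSC V d) :
    ∀ t, t ≤ d + 1 → ∀ α ∈ X.faces, α.card = d + 1 - t → 0 < X.Waux t α := by
  intro t
  induction t with
  | zero =>
    intro _ α hα hc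
    exact X.weight_pos α hα (by omega)
  | succ t ih =>
    intro ht α hα hc
    obtain ⟨β, hβ, hsub, hβc⟩ := X.exists_superface hα (by omega)
    show 0 < (1 / ((d + 1 - t : ℕ) : ℝ)) *
      ∑ β ∈ X.faces.filter (fun β => α ⊆ β ∧ β.card = d + 1 - t), X.Waux t β
    have h1 : (0 : ℝ) < ((d + 1 - t : ℕ) : ℝ) := by
      have : 0 < d + 1 - t := by omega
      exact_mod_cast this
    have hsum : 0 < ∑ β ∈ X.faces.filter (fun β => α ⊆ β ∧ β.card = d + 1 - t), X.Waux t β := by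
      apply Finset.sum_pos
      · intro γ hγ
        simp only [Finset.mem_filter] at hγ
        exact ih (by omega) γ hγ.1 hγ.2.2
      · refine ⟨β, ?_⟩
        simp only [Finset.mem_filter]
        exact ⟨hβ, hsub, by omega⟩
    positivity

lemma W_pos (X : WSC V d) {m : ℕ} (hm : m ≤ d + 1) {α : Finset V}
    (hα : α ∈ X.faces) (hc : α.card = m) : 0 < X.W m α :=
  X.Waux_pos (d + 1 - m) (by omega) α hα (by omega)

lemma W_marginal (X : WSC V d) {m : ℕ} (hm : m ≤ d) (α : Finset V) :
    X.W m α = (1 / ((m + 1 : ℕ) : ℝ)) *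
      ∑ β ∈ X.faces.filter (fun β => α ⊆ β ∧ β.card = m + 1), X.W (m + 1) β := by
  have h1 : d + 1 - m = (d - m) + 1 := by omega
  have h2 : d + 1 - (d - m) = m + 1 := by omega
  have h3 : d + 1 - (m + 1) = d - m := by omega
  unfold W
  rw [h1, h3]
  show (1 / ((d + 1 - (d - m) : ℕ) : ℝ)) *
      ∑ β ∈ X.faces.filter (fun β => α ⊆ β ∧ β.card = d + 1 - (d - m)), X.Waux (d - m) β = _
  simp only [h2]

lemma sum_W_superset (X : WSC V d) {m : ℕ} (hm : m ≤ d) (α : Finset V) :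
    ∑ β ∈ X.faces.filter (fun β => α ⊆ β ∧ β.card = m + 1), X.W (m + 1) β
      = ((m : ℝ) + 1) * X.W m α := by
  rw [X.W_marginal hm α]
  have : ((m + 1 : ℕ) : ℝ) ≠ 0 := by positivity
  push_cast
  field_simp

lemma filter_subset_card (X : WSC V d) {β : Finset V} (hβ : β ∈ X.faces) (m : ℕ) :
    X.faces.filter (fun α => α ⊆ β ∧ α.card = m) = β.powersetCard m := by
  ext α
  simp only [Finset.mem_filter, Finset.mem_powersetCard]
  exact ⟨fun h => h.2, fun h => ⟨X.down_closed β hβ α h.1, h⟩⟩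

lemma sum_powersetCard_pred {β : Finset V} {m : ℕ} (hc : β.card = m + 1) (f : Finset V → ℝ) :
    ∑ α ∈ β.powersetCard m, f α = ∑ x ∈ β, f (β.erase x) := by
  have himg : β.powersetCard m = β.image (fun x => β.erase x) := by
    ext α
    simp only [Finset.mem_image, Finset.mem_powersetCard]
    constructor
    · rintro ⟨hsub, hcard⟩
      have hsd : (β \ α).card = 1 := by
        rw [Finset.card_sdiff_of_subset hsub, hc, hcard]
        omega
      obtain ⟨x, hx⟩ := Finset.card_eq_one.1 hsd
      have hxmem : x ∈ β \ α := hx ▸ Finset.mem_singleton_self x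
      have hxβ : x ∈ β := (Finset.mem_sdiff.1 hxmem).1
      have hxα : x ∉ α := (Finset.mem_sdiff.1 hxmem).2
      refine ⟨x, hxβ, ?_⟩
      ext y
      simp only [Finset.mem_erase]
      constructor
      · rintro ⟨hyx, hyβ⟩
        by_contra hyα
        have : y ∈ β \ α := Finset.mem_sdiff.2 ⟨hyβ, hyα⟩
        rw [hx] at this
        exact hyx (Finset.mem_singleton.1 this)
      · intro hyα
        exact ⟨fun h => hxα (h ▸ hyα), hsub hyα⟩
    · rintro ⟨x, hx, rfl⟩
      refine ⟨Finset.erase_subset _ _, ?_⟩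
      rw [Finset.card_erase_of_mem hx, hc]
      omega
  rw [himg]
  apply Finset.sum_image
  intro x hx y hy hxy
  by_contra hne
  have hmem : y ∈ β.erase x := Finset.mem_erase.2 ⟨fun h => hne h.symm, hy⟩
  have hxy' : β.erase x = β.erase y := hxy
  rw [hxy'] at hmem
  exact (Finset.mem_erase.1 hmem).1 rfl

lemma sum_pairs (X : WSC V d) (m : ℕ) (F : Finset V → Finset V → ℝ) :
    ∑ α ∈ X.faces.filter (fun α => α.card = m),
      ∑ β ∈ X.faces.filter (fun β => α ⊆ β ∧ β.card = m + 1), F α β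
    = ∑ β ∈ X.faces.filter (fun β => β.card = m + 1), ∑ x ∈ β, F (β.erase x) β := by
  rw [Finset.sum_comm' (t' := X.faces.filter (fun β => β.card = m + 1))
    (s' := fun β => X.faces.filter (fun α => α ⊆ β ∧ α.card = m)) ?h]
  case h =>
    intro α β
    simp only [Finset.mem_filter]
    tauto
  refine Finset.sum_congr rfl fun β hβ => ?_
  simp only [Finset.mem_filter] at hβ
  rw [X.filter_subset_card hβ.1 m, sum_powersetCard_pred hβ.2]

lemma inn_downOp (X : WSC V d) {m : ℕ} (hm : m ≤ d) (f g : Finset V → ℝ) :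
    X.inn m f (X.downOp g) = X.inn (m + 1) (upOp f) g := by
  have key := X.sum_pairs m (fun α β => f α * (X.W (m + 1) β * g β) / ((m : ℝ) + 1))
  unfold inn downOp upOp
  calc ∑ α ∈ X.faces.filter (fun α => α.card = m), X.W m α * f α *
        (∑ β ∈ X.faces.filter (fun β => α ⊆ β ∧ β.card = α.card + 1),
          X.W (α.card + 1) β * g β / (((α.card : ℝ) + 1) * X.W α.card α))
      = ∑ α ∈ X.faces.filter (fun α => α.card = m),
          ∑ β ∈ X.faces.filter (fun β => α ⊆ β ∧ β.card = m + 1),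
            f α * (X.W (m + 1) β * g β) / ((m : ℝ) + 1) := by
        refine Finset.sum_congr rfl fun α hα => ?_
        simp only [Finset.mem_filter] at hα
        obtain ⟨hαf, hαc⟩ := hα
        have hW : X.W m α ≠ 0 := ne_of_gt (X.W_pos (by omega) hαf hαc)
        have hm1 : ((m : ℝ) + 1) ≠ 0 := by positivity
        rw [hαc, Finset.mul_sum]
        refine Finset.sum_congr rfl fun β hβ => ?_
        field_simp
    _ = ∑ β ∈ X.faces.filter (fun β => β.card = m + 1), ∑ x ∈ β,
          f (β.erase x) * (X.W (m + 1) β * g β) / ((m : ℝ) + 1) := key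
    _ = ∑ β ∈ X.faces.filter (fun β => β.card = m + 1),
          X.W (m + 1) β * ((1 / (β.card : ℝ)) * ∑ x ∈ β, f (β.erase x)) * g β := by
        refine Finset.sum_congr rfl fun β hβ => ?_
        simp only [Finset.mem_filter] at hβ
        rw [hβ.2]
        push_cast
        simp only [mul_div_assoc, mul_assoc]
        rw [← Finset.sum_mul]
        ring

lemma inn_upOp_le (X : WSC V d) {m : ℕ} (hm : m ≤ d) (f : Finset V → ℝ) :
    X.inn (m + 1) (upOp f) (upOp f) ≤ X.inn m f f := by
  have key := X.sum_pairs m (fun α β => X.W (m + 1) β * f α ^ 2 / ((m : ℝ) + 1))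
  unfold inn upOp
  calc ∑ β ∈ X.faces.filter (fun β => β.card = m + 1),
        X.W (m + 1) β * ((1 / (β.card : ℝ)) * ∑ x ∈ β, f (β.erase x)) *
          ((1 / (β.card : ℝ)) * ∑ x ∈ β, f (β.erase x))
      ≤ ∑ β ∈ X.faces.filter (fun β => β.card = m + 1), ∑ x ∈ β,
          X.W (m + 1) β * f (β.erase x) ^ 2 / ((m : ℝ) + 1) := by
        refine Finset.sum_le_sum fun β hβ => ?_
        simp only [Finset.mem_filter] at hβ
        have hWnn : 0 ≤ X.W (m + 1) β := le_of_lt (X.W_pos (by omega) hβ.1 hβ.2)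
        have hcs : (∑ x ∈ β, f (β.erase x)) ^ 2 ≤
            ((m : ℝ) + 1) * ∑ x ∈ β, f (β.erase x) ^ 2 := by
          have := sq_sum_le_card_mul_sum_sq (s := β) (f := fun x => f (β.erase x))
          rw [hβ.2] at this
          push_cast at this
          exact this
        have hm1 : (0 : ℝ) < (m : ℝ) + 1 := by positivity
        rw [hβ.2]
        push_cast
        rw [← Finset.sum_div, ← Finset.mul_sum]
        rw [show X.W (m + 1) β * (1 / ((m : ℝ) + 1) * ∑ x ∈ β, f (β.erase x)) *
              (1 / ((m : ℝ) + 1) * ∑ x ∈ β, f (β.erase x))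
            = X.W (m + 1) β * ((∑ x ∈ β, f (β.erase x)) ^ 2 / ((m : ℝ) + 1)) / ((m : ℝ) + 1) by
          ring]
        rw [div_le_div_iff_of_pos_right hm1]
        apply mul_le_mul_of_nonneg_left _ hWnn
        rw [div_le_iff₀ hm1]
        exact hcs.trans_eq (mul_comm _ _)
    _ = ∑ α ∈ X.faces.filter (fun α => α.card = m),
          ∑ β ∈ X.faces.filter (fun β => α ⊆ β ∧ β.card = m + 1),
            X.W (m + 1) β * f α ^ 2 / ((m : ℝ) + 1) := key.symm
    _ = ∑ α ∈ X.faces.filter (fun α => α.card = m), X.W m α * f α * f α := by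
        refine Finset.sum_congr rfl fun α hα => ?_
        simp only [Finset.mem_filter] at hα
        have hs := X.sum_W_superset hm α
        have hm1 : ((m : ℝ) + 1) ≠ 0 := by positivity
        rw [← Finset.sum_div, ← Finset.sum_mul, hs]
        field_simp

lemma downOp_one (X : WSC V d) {α : Finset V} (hα : α ∈ X.faces) (hm : α.card ≤ d) :
    X.downOp (fun _ => 1) α = 1 := by
  have hW : 0 < X.W α.card α := X.W_pos (by omega) hα rfl
  have hs := X.sum_W_superset hm α
  unfold downOp
  simp only [mul_one]
  rw [← Finset.sum_div, hs]
  have hm1 : ((α.card : ℝ) + 1) ≠ 0 := by positivity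
  field_simp

lemma inn_downOp_one (X : WSC V d) {m : ℕ} (hm : m ≤ d) (f : Finset V → ℝ) :
    X.inn m f (X.downOp (fun _ => 1)) = X.inn m f (fun _ => 1) := by
  unfold inn
  refine Finset.sum_congr rfl fun α hα => ?_
  simp only [Finset.mem_filter] at hα
  rw [X.downOp_one hα.1 (by omega)]

lemma inn_self_nonneg (X : WSC V d) (m : ℕ) (f : Finset V → ℝ) : 0 ≤ X.inn m f f := by
  refine Finset.sum_nonneg fun α hα => ?_
  simp only [Finset.mem_filter] at hα
  have hm : m ≤ d + 1 := hα.2 ▸ X.dim_le α hα.1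
  have hW : 0 < X.W m α := X.W_pos hm hα.1 hα.2
  have : X.W m α * f α * f α = X.W m α * f α ^ 2 := by ring
  rw [this]
  positivity

lemma inn_eq_zero_of_self (X : WSC V d) {m : ℕ} {u : Finset V → ℝ}
    (h : X.inn m u u = 0) (g : Finset V → ℝ) : X.inn m u g = 0 := by
  unfold inn at h ⊢
  rw [Finset.sum_eq_zero_iff_of_nonneg ?nn] at h
  case nn =>
    intro α hα
    simp only [Finset.mem_filter] at hα
    have hm : m ≤ d + 1 := hα.2 ▸ X.dim_le α hα.1
    have hW : 0 < X.W m α := X.W_pos hm hα.1 hα.2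
    have : X.W m α * u α * u α = X.W m α * u α ^ 2 := by ring
    rw [this]
    positivity
  refine Finset.sum_eq_zero fun α hα => ?_
  have h0 := h α hα
  simp only [Finset.mem_filter] at hα
  have hm : m ≤ d + 1 := hα.2 ▸ X.dim_le α hα.1
  have hW : X.W m α ≠ 0 := ne_of_gt (X.W_pos hm hα.1 hα.2)
  have hu : u α = 0 := by
    rcases mul_eq_zero.1 h0 with h' | h'
    · rcases mul_eq_zero.1 h' with h'' | h''
      · exact absurd h'' hW
      · exact h''
    · exact h'
  rw [hu]
  ring

lemma inn_downOp_iter (X : WSC V d) :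
    ∀ (t m : ℕ), m + t ≤ d + 1 → ∀ f g : Finset V → ℝ,
      X.inn m f ((X.downOp)^[t] g) = X.inn (m + t) (upOp^[t] f) g := by
  intro t
  induction t with
  | zero => intro m _ f g; simp
  | succ t ih =>
    intro m h f g
    rw [Function.iterate_succ_apply', X.inn_downOp (by omega), ih (m + 1) (by omega),
      ← Function.iterate_succ_apply, show m + 1 + t = m + (t + 1) by omega]

lemma inn_upOp_iter_le (X : WSC V d) :
    ∀ (t m : ℕ), m + t ≤ d + 1 → ∀ f : Finset V → ℝ,
      X.inn (m + t) (upOp^[t] f) (upOp^[t] f) ≤ X.inn m f f := by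
  intro t
  induction t with
  | zero => intro m _ f; simp
  | succ t ih =>
    intro m h f
    rw [Function.iterate_succ_apply, show m + (t + 1) = m + 1 + t by omega]
    exact le_trans (ih (m + 1) (by omega) (upOp f)) (X.inn_upOp_le (by omega) f)

lemma inn_upDownAB (X : WSC V d) {t m : ℕ} (h : m + t ≤ d + 1) (f g : Finset V → ℝ) :
    X.inn m f (X.upDownAB t g) = X.inn (m + t) (upOp^[t] f) (upOp^[t] g) :=
  X.inn_downOp_iter t m h f _

lemma inn_upDownAB_nonneg (X : WSC V d) {t m : ℕ} (h : m + t ≤ d + 1) (f : Finset V → ℝ) :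
    0 ≤ X.inn m f (X.upDownAB t f) := by
  rw [X.inn_upDownAB h]
  exact X.inn_self_nonneg _ _

lemma inn_upDownAB_le (X : WSC V d) {t m : ℕ} (h : m + t ≤ d + 1) (f : Finset V → ℝ) :
    X.inn m f (X.upDownAB t f) ≤ X.inn m f f := by
  rw [X.inn_upDownAB h]
  exact X.inn_upOp_iter_le t m h f

lemma bddAbove_RS (X : WSC V d) {t m : ℕ} (h : m + t ≤ d + 1) :
    BddAbove { r : ℝ | ∃ f : Finset V → ℝ,
      X.inn m f (fun _ => 1) = 0 ∧ X.inn m f f ≠ 0 ∧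
      r = X.inn m f (X.upDownAB t f) / X.inn m f f } := by
  refine ⟨1, fun r hr => ?_⟩
  obtain ⟨f, h1, h2, rfl⟩ := hr
  have hff : 0 < X.inn m f f := lt_of_le_of_ne (X.inn_self_nonneg m f) (Ne.symm h2)
  rw [div_le_one hff]
  exact X.inn_upDownAB_le h f

lemma rayleigh_le_lam2 (X : WSC V d) {t m : ℕ} (h : m + t ≤ d + 1) (f : Finset V → ℝ)
    (h1 : X.inn m f (fun _ => 1) = 0) (h2 : X.inn m f f ≠ 0) :
    X.inn m f (X.upDownAB t f) / X.inn m f f ≤ X.lam2 m (X.upDownAB t) :=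
  le_csSup (X.bddAbove_RS h) ⟨f, h1, h2, rfl⟩

lemma lam2_upDownAB_nonneg (X : WSC V d) {t m : ℕ} (h : m + t ≤ d + 1) :
    0 ≤ X.lam2 m (X.upDownAB t) := by
  apply Real.sSup_nonneg
  rintro r ⟨f, h1, h2, rfl⟩
  have hff : 0 < X.inn m f f := lt_of_le_of_ne (X.inn_self_nonneg m f) (Ne.symm h2)
  exact div_nonneg (X.inn_upDownAB_nonneg h f) (le_of_lt hff)

lemma upDownAB_one (X : WSC V d) : X.upDownAB 1 = X.upDown := by
  funext f
  simp [upDownAB, upDown]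

lemma upDownAB_succ (X : WSC V d) (t : ℕ) (f : Finset V → ℝ) :
    X.upDownAB (t + 1) f = X.downOp (X.upDownAB t (upOp f)) := by
  unfold upDownAB
  rw [Function.iterate_succ_apply' X.downOp t, Function.iterate_succ_apply upOp t]

theorem key (X : WSC V d) :
    ∀ (t m : ℕ), 1 ≤ t → m + t ≤ d + 1 →
      X.lam2 m (X.upDownAB t) ≤ ∏ j ∈ Finset.range t, X.lam2 (m + j) X.upDown := by
  intro t
  induction t with
  | zero => intro m h; omega
  | succ t ih =>
    intro m _ h
    rcases Nat.eq_zero_or_pos t with rfl | ht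
    · rw [X.upDownAB_one, Finset.prod_range_one, Nat.add_zero]
    · have hm1 : m + 1 + t ≤ d + 1 := by omega
      have hmu0 : 0 ≤ X.lam2 m X.upDown := by
        rw [← X.upDownAB_one]
        exact X.lam2_upDownAB_nonneg (t := 1) (by omega)
      have hl0 : 0 ≤ X.lam2 (m + 1) (X.upDownAB t) := X.lam2_upDownAB_nonneg hm1
      have main : X.lam2 m (X.upDownAB (t + 1)) ≤
          X.lam2 (m + 1) (X.upDownAB t) * X.lam2 m X.upDown := by
        unfold lam2
        apply Real.sSup_le _ (mul_nonneg hl0 hmu0)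
        rintro r ⟨f, h1, h2, rfl⟩
        have hff : 0 < X.inn m f f := lt_of_le_of_ne (X.inn_self_nonneg m f) (Ne.symm h2)
        set u := upOp f with hu
        have hA : X.inn m f (X.upDownAB (t + 1) f) = X.inn (m + 1) u (X.upDownAB t u) := by
          rw [X.upDownAB_succ, X.inn_downOp (by omega)]
        have hB : X.inn (m + 1) u u = X.inn m f (X.upDown f) :=
          (X.inn_downOp (by omega) f u).symm
        have hu1 : X.inn (m + 1) u (fun _ => 1) = 0 := by
          rw [← X.inn_downOp (by omega) f (fun _ => 1), X.inn_downOp_one (by omega)]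
          exact h1
        have hBnn : 0 ≤ X.inn (m + 1) u u := X.inn_self_nonneg _ _
        have hBle : X.inn m f (X.upDown f) ≤ X.lam2 m X.upDown * X.inn m f f := by
          have hr := X.rayleigh_le_lam2 (t := 1) (by omega) f h1 h2
          rw [X.upDownAB_one] at hr
          rw [div_le_iff₀ hff] at hr
          linarith
        have hlB : X.inn (m + 1) u (X.upDownAB t u) ≤
            X.lam2 (m + 1) (X.upDownAB t) * X.inn (m + 1) u u := by
          rcases eq_or_ne (X.inn (m + 1) u u) 0 with h0 | h0
          · rw [h0, mul_zero, X.inn_eq_zero_of_self h0]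
          · have hr := X.rayleigh_le_lam2 hm1 u hu1 h0
            rw [div_le_iff₀ (lt_of_le_of_ne hBnn (Ne.symm h0))] at hr
            linarith
        rw [div_le_iff₀ hff]
        calc X.inn m f (X.upDownAB (t + 1) f)
            = X.inn (m + 1) u (X.upDownAB t u) := hA
          _ ≤ X.lam2 (m + 1) (X.upDownAB t) * X.inn (m + 1) u u := hlB
          _ = X.lam2 (m + 1) (X.upDownAB t) * X.inn m f (X.upDown f) := by rw [hB]
          _ ≤ X.lam2 (m + 1) (X.upDownAB t) * (X.lam2 m X.upDown * X.inn m f f) :=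
              mul_le_mul_of_nonneg_left hBle hl0
          _ = X.lam2 (m + 1) (X.upDownAB t) * X.lam2 m X.upDown * X.inn m f f := by ring
      calc X.lam2 m (X.upDownAB (t + 1))
          ≤ X.lam2 (m + 1) (X.upDownAB t) * X.lam2 m X.upDown := main
        _ ≤ (∏ j ∈ Finset.range t, X.lam2 (m + 1 + j) X.upDown) * X.lam2 m X.upDown :=
            mul_le_mul_of_nonneg_right (ih (m + 1) ht hm1) hmu0
        _ = ∏ j ∈ Finset.range (t + 1), X.lam2 (m + j) X.upDown := by
            rw [Finset.prod_range_succ', Nat.add_zero]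
            congr 1
            exact Finset.prod_congr rfl fun j _ => by rw [show m + 1 + j = m + (j + 1) by omega]

end WSC

/-- **Lemma (splitting longer walks).** Let `(X, Π)` be a weighted pure
`d`-dimensional simplicial complex and `0 ≤ a < b ≤ d-1`.  Then
`λ₂(U_{a,b}) ≤ ∏_{j=0}^{b-a-1} λ₂(P∧_{a+j})`. -/
theorem lam2_upDownAB_le_prod {V : Type*} [DecidableEq V] [Fintype V] {d : ℕ}
    (X : WSC V d) (a b : ℕ) (hab : a < b) (hbd : b < d) :
    X.lam2 (a + 1) (X.upDownAB (b - a)) ≤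
      ∏ j ∈ Finset.range (b - a), X.lam2 (a + j + 1) X.upDown := by
  calc X.lam2 (a + 1) (X.upDownAB (b - a))
      ≤ ∏ j ∈ Finset.range (b - a), X.lam2 (a + 1 + j) X.upDown :=
        X.key (b - a) (a + 1) (by omega) (by omega)
    _ = ∏ j ∈ Finset.range (b - a), X.lam2 (a + j + 1) X.upDown :=
        Finset.prod_congr rfl fun j _ => by rw [show a + 1 + j = a + j + 1 by omega]
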